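/- Let G be a connected locally finite simple graph and let xy be an edge of G with d(x) = d(y) = 3 such that x and y have exactly one common neighbor. Then κ(x,y) ≥ 1/3. -/

import Mathlib

open scoped BigOperators

namespace LLY

variable {V : Type*}

/-- Degree of a vertex (as `Nat.card` of its neighbor set; agrees with the usual
degree in a locally finite graph). -/
noncomputable def deg (G : SimpleGraph V) (u : V) : ℕ := Nat.card (G.neighborSet u)

/-- `G` is locally finite. -/
def LocFin (G : SimpleGraph V) : Prop := ∀ v : V, (G.neighborSet v).Finite

/-- `f` is 1-Lipschitz with respect to the graph distance of `G`. -/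
def Lip1 (G : SimpleGraph V) (f : V → ℝ) : Prop :=
  ∀ a b : V, |f a - f b| ≤ (G.dist a b : ℝ)

/-- The (normalized) graph Laplacian `Δf(u) = (1/d(u)) ∑_{v ∈ N(u)} (f v - f u)`. -/
noncomputable def lap (G : SimpleGraph V) (f : V → ℝ) (u : V) : ℝ :=
  (1 / (deg G u : ℝ)) * ∑ᶠ v ∈ G.neighborSet u, (f v - f u)

/-- The gradient `∇_{xy} f = (f x - f y)/d(x,y)`. -/
noncomputable def grad (G : SimpleGraph V) (f : V → ℝ) (x y : V) : ℝ :=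
  (f x - f y) / (G.dist x y : ℝ)

/-- Lin–Lu–Yau curvature of the pair `{x,y}` (limit-free Münch–Wojciechowski form):
`κ(x,y) = inf { ∇_{xy} Δf : f 1-Lipschitz, ∇_{yx} f = 1 }`. -/
noncomputable def kappa (G : SimpleGraph V) (x y : V) : ℝ :=
  sInf {k : ℝ | ∃ f : V → ℝ, Lip1 G f ∧ grad G f y x = 1 ∧ k = grad G (lap G f) x y}

end LLY


open LLY in
theorem curv_ge_third_deg_three {V : Type*} (G : SimpleGraph V)
    (hconn : G.Connected) (hfin : LocFin G) (x y : V) (hxy : G.Adj x y)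
    (hdx : deg G x = 3) (hdy : deg G y = 3)
    (hcard : Nat.card ↥(G.neighborSet x ∩ G.neighborSet y) = 1) :
    kappa G x y ≥ 1 / 3 := by
  classical
  have hd1 : G.dist x y = 1 := SimpleGraph.dist_eq_one_iff_adj.mpr hxy
  have hd1' : G.dist y x = 1 := SimpleGraph.dist_eq_one_iff_adj.mpr hxy.symm
  -- common neighbor w
  obtain ⟨w, hwset⟩ : ∃ w, G.neighborSet x ∩ G.neighborSet y = {w} :=
    Set.ncard_eq_one.mp hcard
  have hwmem : w ∈ G.neighborSet x ∩ G.neighborSet y := hwset ▸ rfl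
  have hwx : G.Adj x w := hwmem.1
  have hwy : G.Adj y w := hwmem.2
  set Sx := (hfin x).toFinset with hSx
  set Sy := (hfin y).toFinset with hSy
  have hSxm : ∀ v, v ∈ Sx ↔ G.Adj x v := by intro v; simp [hSx]
  have hSym : ∀ v, v ∈ Sy ↔ G.Adj y v := by intro v; simp [hSy]
  have hcSx : Sx.card = 3 := by
    rw [← hdx]
    simp [deg, Nat.card_coe_set_eq, Set.ncard_eq_toFinset_card _ (hfin x), hSx]
  have hcSy : Sy.card = 3 := by
    rw [← hdy]
    simp [deg, Nat.card_coe_set_eq, Set.ncard_eq_toFinset_card _ (hfin y), hSy]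
  have hyw : y ≠ w := fun h => G.irrefl (h ▸ hwy)
  have hxw : x ≠ w := fun h => G.irrefl (h ▸ hwx)
  have hySx : y ∈ Sx := (hSxm y).mpr hxy
  have hwSx : w ∈ Sx := (hSxm w).mpr hwx
  have hxSy : x ∈ Sy := (hSym x).mpr hxy.symm
  have hwSy : w ∈ Sy := (hSym w).mpr hwy
  -- extract the third neighbors
  have extract : ∀ (S : Finset V) (u v : V), S.card = 3 → u ∈ S → v ∈ S → u ≠ v →
      ∃ a, S = {u, v, a} ∧ a ≠ u ∧ a ≠ v := by
    intro S u v hc hu hv huv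
    have hsub : ({u, v} : Finset V) ⊆ S := by
      intro z hz; simp only [Finset.mem_insert, Finset.mem_singleton] at hz
      rcases hz with h | h <;> subst h <;> assumption
    have hcd : (S \ {u, v}).card = 1 := by
      rw [Finset.card_sdiff_of_subset hsub, hc, Finset.card_insert_of_notMem (by simp [huv]),
        Finset.card_singleton]
    obtain ⟨a, ha⟩ := Finset.card_eq_one.mp hcd
    have haS : a ∈ S \ ({u, v} : Finset V) := ha ▸ Finset.mem_singleton_self a
    rw [Finset.mem_sdiff, Finset.mem_insert, Finset.mem_singleton] at haS
    push_neg at haS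
    refine ⟨a, ?_, haS.2.1, haS.2.2⟩
    apply (Finset.eq_of_subset_of_card_le ?_ ?_).symm
    · intro z hz
      simp only [Finset.mem_insert, Finset.mem_singleton] at hz
      rcases hz with h | h | h <;> subst h
      · exact hu
      · exact hv
      · exact haS.1
    · rw [hc]
      rw [Finset.card_insert_of_notMem (by simp [huv, Ne.symm haS.2.1]),
        Finset.card_insert_of_notMem (by simp [Ne.symm haS.2.2]), Finset.card_singleton]
  obtain ⟨a, hSxeq, hay, haw⟩ := extract Sx y w hcSx hySx hwSx hyw
  obtain ⟨b, hSyeq, hbx, hbw⟩ := extract Sy x w hcSy hxSy hwSy hxw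
  have hxa : G.Adj x a := (hSxm a).mp (by rw [hSxeq]; simp)
  have hyb : G.Adj y b := (hSym b).mp (by rw [hSyeq]; simp)
  -- the key pointwise bound
  have key : ∀ f : V → ℝ, Lip1 G f → grad G f y x = 1 → grad G (lap G f) x y ≥ 1/3 := by
    intro f hLip hgrad
    have h1 : f y - f x = 1 := by
      have := hgrad
      rw [grad, hd1'] at this
      simpa using this
    -- bound on f a - f b
    have hab : f a - f b ≥ -3 := by
      have h2 : |f a - f b| ≤ (G.dist a b : ℝ) := hLip a b
      have h3 : G.dist a b ≤ 3 := by
        have t1 : G.dist a b ≤ G.dist a y + G.dist y b := hconn.dist_triangle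
        have t2 : G.dist a y ≤ G.dist a x + G.dist x y := hconn.dist_triangle
        have hax : G.dist a x = 1 := SimpleGraph.dist_eq_one_iff_adj.mpr hxa.symm
        have hby : G.dist y b = 1 := SimpleGraph.dist_eq_one_iff_adj.mpr hyb
        omega
      have h4 : (G.dist a b : ℝ) ≤ 3 := by exact_mod_cast h3
      have := neg_abs_le (f a - f b)
      linarith
    -- compute lap at x and y
    have hlx : lap G f x = (1/3) * ((f y - f x) + (f w - f x) + (f a - f x)) := by
      rw [lap, hdx]
      congr 1
      rw [finsum_mem_eq_finite_toFinset_sum _ (hfin x), ← hSx, hSxeq]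
      rw [Finset.sum_insert (by simp [hyw, Ne.symm hay]),
        Finset.sum_insert (by simp [Ne.symm haw]), Finset.sum_singleton]
      ring
    have hly : lap G f y = (1/3) * ((f x - f y) + (f w - f y) + (f b - f y)) := by
      rw [lap, hdy]
      congr 1
      rw [finsum_mem_eq_finite_toFinset_sum _ (hfin y), ← hSy, hSyeq]
      rw [Finset.sum_insert (by simp [hxw, Ne.symm hbx]),
        Finset.sum_insert (by simp [Ne.symm hbw]), Finset.sum_singleton]
      ring
    rw [grad, hd1, hlx, hly]
    push_cast
    rw [div_one]
    linarith
  -- nonemptiness witness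
  have hne : {k : ℝ | ∃ f : V → ℝ, Lip1 G f ∧ grad G f y x = 1 ∧
      k = grad G (lap G f) x y}.Nonempty := by
    refine ⟨grad G (lap G (fun v => (G.dist v x : ℝ))) x y, fun v => (G.dist v x : ℝ), ?_, ?_, rfl⟩
    · intro c d
      rw [abs_sub_le_iff]
      constructor
      · have := hconn.dist_triangle (u := c) (v := d) (w := x)
        have h := (Nat.cast_le (α := ℝ)).mpr this
        push_cast at h ⊢
        linarith
      · have := hconn.dist_triangle (u := d) (v := c) (w := x)
        have h := (Nat.cast_le (α := ℝ)).mpr this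
        have hcomm : G.dist d c = G.dist c d := SimpleGraph.dist_comm
        rw [hcomm] at h
        push_cast at h ⊢
        linarith
    · rw [grad, hd1', SimpleGraph.dist_self]
      norm_num
  -- conclude
  rw [kappa, ge_iff_le]
  apply le_csInf hne
  rintro k ⟨f, hLip, hgrad, rfl⟩
  exact key f hLip hgrad
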